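/- Let f(t) = pα e^{-αt} + qβ e^{-βt} and f₁(t) = t f(t), with 0 < p < 1, q = 1−p, β > α > 0. Then for m ≥ 0 and t > 0, (f^{*m} * f₁)(t) = pα ∑_{r=0}^m C(m,r) (αp)^r (βq)^{m−r} (e^{−βt} t^{m+1}/Γ(m+2)) ₁F₁(r+2; m+2; (β−α)t) + qβ ∑_{r=0}^m C(m,r) (αp)^r (βq)^{m−r} (e^{−βt} t^{m+1}/Γ(m+2)) ₁F₁(r; m+2; (β−α)t). -/

import Mathlib

open Real

/-- Convolution of two functions on `(0, ∞)`: `(g * h)(t) = ∫_0^t g(t-v) h(v) dv`. -/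
noncomputable def conv (g h : ℝ → ℝ) : ℝ → ℝ := fun t => ∫ v in (0:ℝ)..t, g (t - v) * h v

/-- `cpm f g m = f^{*m} * g`, the `m`-fold self-convolution of `f` convolved with `g`
(with `f^{*0} * g = g`).  In particular `cpm f f m = f^{*(m+1)}`. -/
noncomputable def cpm (f g : ℝ → ℝ) : ℕ → ℝ → ℝ
  | 0 => g
  | m + 1 => conv f (cpm f g m)

open Finset

/-- Pochhammer symbol `(a)_i = a (a+1) ⋯ (a+i-1)`. -/
noncomputable def poch (a : ℝ) (i : ℕ) : ℝ := ∏ k ∈ range i, (a + k)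

/-- Confluent hypergeometric function `₁F₁(a; b; z) = ∑_{i≥0} ((a)_i/(b)_i) z^i/i!`. -/
noncomputable def hyp1F1 (a b z : ℝ) : ℝ := ∑' i : ℕ, (poch a i / poch b i) * z ^ i / i.factorial

/- ## Auxiliary lemmas -/

lemma poch_zero (a : ℝ) : poch a 0 = 1 := by simp [poch]

lemma poch_succ (a : ℝ) (i : ℕ) : poch a (i+1) = poch a i * (a + i) := by
  simp [poch, Finset.prod_range_succ]

lemma poch_succ' (a : ℝ) (i : ℕ) : poch a (i+1) = a * poch (a+1) i := by
  simp only [poch, Finset.prod_range_succ']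
  rw [mul_comm]; congr 1
  · push_cast; ring
  · apply Finset.prod_congr rfl; intro k _; push_cast; ring

lemma poch_nonneg {a : ℝ} (ha : 0 ≤ a) (i : ℕ) : 0 ≤ poch a i := by
  apply Finset.prod_nonneg; intro k _; positivity

lemma poch_pos {a : ℝ} (ha : 0 < a) (i : ℕ) : 0 < poch a i := by
  apply Finset.prod_pos; intro k _; positivity

lemma poch_mono {a b : ℝ} (ha : 0 ≤ a) (hab : a ≤ b) (i : ℕ) : poch a i ≤ poch b i := by
  apply Finset.prod_le_prod
  · intro k _; positivity
  · intro k _; linarith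

lemma poch_nat_factorial (n i : ℕ) : poch (n+1 : ℝ) i * n.factorial = (n+i).factorial := by
  induction i with
  | zero => simp [poch_zero]
  | succ i ih =>
      rw [poch_succ, mul_comm (poch _ i) _, mul_assoc, ih]
      have : n + (i+1) = (n+i) + 1 := by ring
      rw [this, Nat.factorial_succ]
      push_cast; ring

lemma vand (m : ℕ) : ∀ (a n : ℝ),
    ∑ k ∈ range (m+1), (-1:ℝ)^k * (m.choose k : ℝ) * poch a k * poch (n+k+1) (m-k)
      = poch (n+1-a) m := by
  induction m with
  | zero => intro a n; simp [poch_zero]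
  | succ m ih =>
    intro a n
    have hrhs : poch (n+1-a) (m+1) = (n+1-a) * poch ((n+1)+1-a) m := by
      rw [poch_succ']; ring_nf
    rw [hrhs, ← ih a (n+1), Finset.mul_sum]
    rw [Finset.sum_range_succ']
    push_cast
    set F : ℕ → ℝ := fun k => (-1:ℝ)^k * (m.choose k : ℝ) * poch a k * poch (n+k+1) (m+1-k) with hF
    have split : ∀ k ∈ range (m+1),
        (-1:ℝ)^(k+1) * (((m+1).choose (k+1) : ℕ) : ℝ) * poch a (k+1) * poch (n + ((k:ℝ)+1) + 1) (m-k)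
        = F (k+1)
          + (-((-1:ℝ)^k * (m.choose k : ℝ) * poch a k * (a+k) * poch (n+(k:ℝ)+2) (m-k))) := by
      intro k hk
      have h1 : (m:ℕ)+1-(k+1) = m-k := by omega
      have h2 : ((n + ((k:ℝ)+1) + 1)) = n + ((k+1 : ℕ) : ℝ) + 1 := by push_cast; ring
      rw [hF]
      simp only [h1, h2]
      rw [Nat.choose_succ_succ, poch_succ a k]
      push_cast
      have h3 : (n + ((k:ℝ)+1) + 1) = n + (k:ℝ) + 2 := by ring
      rw [h3]
      ring
    rw [Finset.sum_congr rfl split, Finset.sum_add_distrib]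
    have hF0 : (-1:ℝ)^0 * (((m+1).choose 0 : ℕ) : ℝ) * poch a 0 * poch (n + 0 + 1) (m+1) = F 0 := by
      simp [hF]
    rw [add_assoc, add_comm (∑ k ∈ range (m+1), -((-1:ℝ)^k * (m.choose k : ℝ) * poch a k * (a+k) * poch (n+(k:ℝ)+2) (m-k))), ← add_assoc, hF0]
    have hsum : (∑ k ∈ range (m+1), F (k+1)) + F 0 = ∑ k ∈ range (m+1), F k := by
      rw [← Finset.sum_range_succ', Finset.sum_range_succ]
      simp [hF, Nat.choose_succ_self]
    rw [hsum, ← Finset.sum_add_distrib]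
    apply Finset.sum_congr rfl
    intro k hk
    simp only [Finset.mem_range] at hk
    have h1 : (m:ℕ)+1-k = (m-k)+1 := by omega
    have h2 : (n+(k:ℝ)+1+1) = n+(k:ℝ)+2 := by ring
    have h3 : (n+1+(k:ℝ)+1) = n+(k:ℝ)+2 := by ring
    rw [hF]
    simp only [h1]
    rw [poch_succ' (n+(k:ℝ)+1), h2, h3]
    ring

/-- the series `P a n z = ∑ (a)_i z^i / (i! (n+i)!)`. -/
noncomputable def P (a n : ℕ) (z : ℝ) : ℝ :=
  ∑' i : ℕ, poch a i * z ^ i / (i.factorial * (n+i).factorial)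

lemma poch_le (a n : ℕ) (h : a ≤ n+1) (i : ℕ) :
    poch a i * n.factorial ≤ (n+i).factorial := by
  rw [← poch_nat_factorial n i]
  apply mul_le_mul_of_nonneg_right _ (by positivity)
  apply poch_mono (by positivity)
  exact_mod_cast h

lemma P_term_bound (a n : ℕ) (h : a ≤ n+1) (z : ℝ) (i : ℕ) :
    |poch a i * z ^ i / (i.factorial * (n+i).factorial)| ≤ (|z| ^ i / i.factorial) * (n.factorial : ℝ)⁻¹ := by
  have h1 : (0:ℝ) < i.factorial := by exact_mod_cast i.factorial_pos
  have h2 : (0:ℝ) < (n+i).factorial := by exact_mod_cast (n+i).factorial_pos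
  have h3 : (0:ℝ) < n.factorial := by exact_mod_cast n.factorial_pos
  have hp : (0:ℝ) ≤ poch a i := poch_nonneg (by positivity) i
  rw [abs_div, abs_mul, abs_of_nonneg hp, abs_pow, abs_of_nonneg (by positivity : (0:ℝ) ≤ (i.factorial : ℝ) * ((n+i).factorial : ℝ))]
  rw [div_le_iff₀ (by positivity)]
  have := poch_le a n h i
  calc poch a i * |z| ^ i ≤ ((n+i).factorial / n.factorial) * |z| ^ i := by
        apply mul_le_mul_of_nonneg_right _ (by positivity)
        rw [le_div_iff₀ h3]; exact this
    _ = |z| ^ i / i.factorial * (n.factorial : ℝ)⁻¹ * ((i.factorial : ℝ) * (n+i).factorial) := by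
        field_simp

lemma P_summable_norm (a n : ℕ) (h : a ≤ n+1) (z : ℝ) :
    Summable (fun i : ℕ => ‖poch a i * z ^ i / (i.factorial * (n+i).factorial)‖) := by
  have hs : Summable (fun i : ℕ => (|z| ^ i / i.factorial) * (n.factorial : ℝ)⁻¹) :=
    (Real.summable_pow_div_factorial |z|).mul_right _
  exact Summable.of_nonneg_of_le (fun i => norm_nonneg _)
    (fun i => by rw [Real.norm_eq_abs]; exact P_term_bound a n h z i) hs

lemma P_summable (a n : ℕ) (h : a ≤ n+1) (z : ℝ) :
    Summable (fun i : ℕ => poch a i * z ^ i / (i.factorial * (n+i).factorial)) :=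
  (P_summable_norm a n h z).of_norm

lemma exp_tsum (z : ℝ) : Real.exp z = ∑' i : ℕ, z ^ i / i.factorial := by
  rw [Real.exp_eq_exp_ℝ, NormedSpace.exp_eq_tsum_div]

lemma exp_summable_norm (z : ℝ) : Summable (fun i : ℕ => ‖z ^ i / (i.factorial : ℝ)‖) := by
  apply Summable.of_nonneg_of_le (fun i => norm_nonneg _) (fun i => ?_) (Real.summable_pow_div_factorial |z|)
  rw [Real.norm_eq_abs, abs_div, abs_pow, abs_of_nonneg (by positivity : (0:ℝ) ≤ (i.factorial:ℝ))]

lemma kummer (a n : ℕ) (h : a ≤ n+1) (z : ℝ) :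
    Real.exp (-z) * P a n z = P (n+1-a) n (-z) := by
  rw [exp_tsum, P, P]
  rw [tsum_mul_tsum_eq_tsum_sum_range_of_summable_norm (exp_summable_norm (-z)) (P_summable_norm a n h z)]
  apply tsum_congr
  intro m
  have hrefl : ∑ k ∈ range (m+1), (-z) ^ k / (k.factorial : ℝ) *
        (poch a (m-k) * z ^ (m-k) / ((m-k).factorial * (n+(m-k)).factorial))
      = ∑ k ∈ range (m+1), (-z) ^ (m-k) / ((m-k).factorial : ℝ) *
        (poch a k * z ^ k / (k.factorial * (n+k).factorial)) := by
    rw [← Finset.sum_range_reflect]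
    apply Finset.sum_congr rfl
    intro k hk
    simp only [Finset.mem_range] at hk
    have h1 : m + 1 - 1 - k = m - k := by omega
    have h2 : m - (m - k) = k := by omega
    rw [h1, h2]
  rw [hrefl]
  have key : ∀ k ∈ range (m+1),
      (-z) ^ (m-k) / ((m-k).factorial : ℝ) *
        (poch a k * z ^ k / (k.factorial * (n+k).factorial))
      = ((-1:ℝ)^k * (m.choose k : ℝ) * poch a k * poch ((n:ℝ)+k+1) (m-k)) *
          ((-z) ^ m / (m.factorial * (n+m).factorial)) := by
    intro k hk
    simp only [Finset.mem_range] at hk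
    obtain ⟨j, rfl⟩ : ∃ j, m = k + j := ⟨m - k, by omega⟩
    have hjk : k + j - k = j := by omega
    rw [hjk]
    have e1 : poch ((n:ℝ)+k+1) j = ((n+(k+j)).factorial : ℝ) / ((n+k).factorial : ℝ) := by
      have := poch_nat_factorial (n+k) j
      have hc : ((n+k : ℕ) : ℝ) + 1 = (n:ℝ)+k+1 := by push_cast; ring
      rw [hc] at this
      have h2 : n + k + j = n + (k+j) := by omega
      rw [h2] at this
      field_simp [← this]
      exact this
    have e2 : (((k+j).choose k : ℕ) : ℝ) = ((k+j).factorial : ℝ) / (k.factorial * j.factorial) := by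
      rw [Nat.cast_choose ℝ (Nat.le_add_right k j)]
      norm_num [hjk]
    have hz1 : (-z) ^ j = (-1:ℝ)^j * z ^ j := by rw [neg_pow]
    have hz2 : (-z) ^ (k+j) = (-1:ℝ)^k * (-1:ℝ)^j * (z ^ k * z ^ j) := by
      ring
    rw [e1, e2, hz1, hz2]
    have f1 : ((k.factorial : ℝ)) ≠ 0 := by exact_mod_cast k.factorial_ne_zero
    have f2 : ((j.factorial : ℝ)) ≠ 0 := by exact_mod_cast j.factorial_ne_zero
    have f3 : (((k+j).factorial : ℝ)) ≠ 0 := by exact_mod_cast (k+j).factorial_ne_zero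
    have f4 : (((n+k).factorial : ℝ)) ≠ 0 := by exact_mod_cast (n+k).factorial_ne_zero
    have f5 : (((n+(k+j)).factorial : ℝ)) ≠ 0 := by exact_mod_cast (n+(k+j)).factorial_ne_zero
    field_simp
    ring_nf
    rw [show ((-1:ℝ))^(k*2) = 1 from by rw [mul_comm, pow_mul]; norm_num]
    ring
  rw [Finset.sum_congr rfl key, ← Finset.sum_mul, vand m a n]
  have hcast : ((n:ℝ) + 1 - (a:ℝ)) = (((n+1-a : ℕ)) : ℝ) := by
    have : a ≤ n+1 := h
    push_cast [Nat.cast_sub this]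
    ring
  rw [hcast]
  ring

/-- swap of interval integral and tsum under a uniform bound -/
lemma integral_tsum_bound {t : ℝ} (ht : 0 < t) (g : ℕ → ℝ → ℝ) (hg : ∀ i, Continuous (g i))
    (u : ℕ → ℝ) (hu : Summable u) (hu0 : ∀ i, 0 ≤ u i)
    (hb : ∀ i, ∀ v ∈ Set.Ioc (0:ℝ) t, |g i v| ≤ u i) :
    ∫ v in (0:ℝ)..t, (∑' i, g i v) = ∑' i, ∫ v in (0:ℝ)..t, g i v := by
  have main : ∫ v in Set.Ioc (0:ℝ) t, (∑' i, g i v) = ∑' i, ∫ v in Set.Ioc (0:ℝ) t, g i v := by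
    apply MeasureTheory.integral_tsum
    · exact fun i => (hg i).aestronglyMeasurable
    · have hle : ∀ i, (∫⁻ v in Set.Ioc (0:ℝ) t, (‖g i v‖₊ : ENNReal)) ≤
          ENNReal.ofReal (u i) * ENNReal.ofReal t := by
        intro i
        calc ∫⁻ v in Set.Ioc (0:ℝ) t, (‖g i v‖₊ : ENNReal)
            ≤ ∫⁻ _ in Set.Ioc (0:ℝ) t, ENNReal.ofReal (u i) := by
              apply MeasureTheory.setLIntegral_mono measurable_const
              intro v hv
              rw [← enorm_eq_nnnorm, Real.enorm_eq_ofReal_abs]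
              exact ENNReal.ofReal_le_ofReal (hb i v hv)
          _ = ENNReal.ofReal (u i) * ENNReal.ofReal t := by
              rw [MeasureTheory.setLIntegral_const, Real.volume_Ioc]
              norm_num
      apply ne_top_of_le_ne_top _ (ENNReal.tsum_le_tsum hle)
      rw [ENNReal.tsum_mul_right, ← ENNReal.ofReal_tsum_of_nonneg hu0 hu]
      exact ENNReal.mul_ne_top ENNReal.ofReal_ne_top ENNReal.ofReal_ne_top
  rw [intervalIntegral.integral_of_le ht.le, main]
  apply tsum_congr
  intro i
  rw [intervalIntegral.integral_of_le ht.le]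

lemma integral_series (C e : ℝ) (b n : ℕ) (hb : b ≤ n+1) {t : ℝ} (ht : 0 < t) :
    ∫ v in (0:ℝ)..t, (∑' i : ℕ, (C * (poch b i * e^i / (i.factorial * (n+i).factorial))) * v^(n+i))
      = C * (t^(n+1) * P b (n+1) (e*t)) := by
  have hswap : ∫ v in (0:ℝ)..t, (∑' i : ℕ, (C * (poch b i * e^i / (i.factorial * (n+i).factorial))) * v^(n+i))
      = ∑' i : ℕ, ∫ v in (0:ℝ)..t, (C * (poch b i * e^i / (i.factorial * (n+i).factorial))) * v^(n+i) := by
    apply integral_tsum_bound ht _ (fun i => by continuity)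
      (fun i => |C| * ((t^n * (|e*t|^i / i.factorial)) * ((n.factorial : ℝ))⁻¹))
    · apply Summable.mul_left
      apply Summable.mul_right
      apply Summable.mul_left
      exact Real.summable_pow_div_factorial |e*t|
    · intro i; positivity
    · intro i v hv
      obtain ⟨hv0, hvt⟩ := hv
      have h2 : |v^(n+i)| ≤ t^(n+i) := by
        rw [abs_pow, abs_of_pos hv0]
        exact pow_le_pow_left₀ hv0.le hvt _
      have h5 := P_term_bound b n hb (e*t) i
      calc |C * (poch b i * e^i / (i.factorial * (n+i).factorial)) * v^(n+i)|
          = |C| * |poch b i * e^i / (i.factorial * (n+i).factorial)| * |v^(n+i)| := by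
            rw [abs_mul, abs_mul]
        _ ≤ |C| * |poch b i * e^i / (i.factorial * (n+i).factorial)| * t^(n+i) := by
            gcongr
        _ = |C| * (|poch b i * (e*t)^i / (i.factorial * (n+i).factorial)| * t^n) := by
            simp only [abs_mul, abs_div, abs_pow, abs_of_pos ht]
            rw [pow_add]
            ring
        _ ≤ |C| * (((|e*t| ^ i / i.factorial) * ((n.factorial : ℝ))⁻¹) * t^n) := by
            gcongr
        _ = |C| * ((t^n * (|e*t|^i / i.factorial)) * ((n.factorial : ℝ))⁻¹) := by
            ring
  rw [hswap, P, ← tsum_mul_left, ← tsum_mul_left]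
  apply tsum_congr
  intro i
  rw [intervalIntegral.integral_const_mul, integral_pow, zero_pow (by omega : n+i+1 ≠ 0)]
  have hfact : (((n+1)+i).factorial : ℝ) = ((n:ℝ) + i + 1) * ((n+i).factorial : ℝ) := by
    have h6 : (n+1)+i = (n+i)+1 := by omega
    rw [h6, Nat.factorial_succ]; push_cast; ring
  have hne : ((n:ℝ) + i + 1) ≠ 0 := by positivity
  have hne2 : ((i.factorial : ℝ)) ≠ 0 := by exact_mod_cast i.factorial_ne_zero
  have hne3 : (((n+i).factorial : ℝ)) ≠ 0 := by exact_mod_cast (n+i).factorial_ne_zero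
  rw [hfact]
  have hc : ((n+i : ℕ) : ℝ) + 1 = (n:ℝ) + i + 1 := by push_cast; ring
  rw [hc, mul_pow]
  field_simp
  ring

lemma conv_beta (β : ℝ) {d : ℝ} (hd : 0 < d) (a n : ℕ) (ha : a ≤ n+1) {t : ℝ} (ht : 0 < t) :
    ∫ v in (0:ℝ)..t, Real.exp (-β*(t-v)) * (Real.exp (-β*v) * (v^n * P a n (d*v)))
      = Real.exp (-β*t) * (t^(n+1) * P a (n+1) (d*t)) := by
  have hinteg : ∀ v : ℝ, Real.exp (-β*(t-v)) * (Real.exp (-β*v) * (v^n * P a n (d*v)))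
      = ∑' i : ℕ, (Real.exp (-β*t) * (poch a i * d^i / (i.factorial * (n+i).factorial))) * v^(n+i) := by
    intro v
    have he : Real.exp (-β*(t-v)) * Real.exp (-β*v) = Real.exp (-β*t) := by
      rw [← Real.exp_add]; ring_nf
    calc Real.exp (-β*(t-v)) * (Real.exp (-β*v) * (v^n * P a n (d*v)))
        = Real.exp (-β*t) * (v^n * P a n (d*v)) := by rw [← mul_assoc, he]
      _ = ∑' i : ℕ, Real.exp (-β*t) * (v^n * (poch a i * (d*v) ^ i / (i.factorial * (n+i).factorial))) := by
          rw [P, ← tsum_mul_left, ← tsum_mul_left]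
      _ = _ := by
          apply tsum_congr; intro i
          rw [mul_pow, pow_add]; ring
  simp_rw [hinteg]
  exact integral_series _ d a n ha ht

lemma conv_alpha (α β : ℝ) (hαβ : α < β) (a n : ℕ) (ha : a ≤ n+1) {t : ℝ} (ht : 0 < t) :
    ∫ v in (0:ℝ)..t, Real.exp (-α*(t-v)) * (Real.exp (-β*v) * (v^n * P a n ((β-α)*v)))
      = Real.exp (-β*t) * (t^(n+1) * P (a+1) (n+1) ((β-α)*t)) := by
  set d := β - α with hdd
  have hd : 0 < d := by rw [hdd]; linarith
  set b := n+1-a with hbb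
  have hb : b ≤ n+1 := by omega
  have hb2 : b ≤ (n+1)+1 := by omega
  have hba : (n+1)+1-b = a+1 := by omega
  have hinteg : ∀ v : ℝ, Real.exp (-α*(t-v)) * (Real.exp (-β*v) * (v^n * P a n (d*v)))
      = ∑' i : ℕ, (Real.exp (-α*t) * (poch b i * (-d)^i / (i.factorial * (n+i).factorial))) * v^(n+i) := by
    intro v
    have he : Real.exp (-α*(t-v)) * Real.exp (-β*v) = Real.exp (-α*t) * Real.exp (-(d*v)) := by
      rw [← Real.exp_add, ← Real.exp_add, hdd]; ring_nf
    have hk := kummer a n ha (d*v)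
    calc Real.exp (-α*(t-v)) * (Real.exp (-β*v) * (v^n * P a n (d*v)))
        = Real.exp (-α*t) * (v^n * (Real.exp (-(d*v)) * P a n (d*v))) := by
          rw [← mul_assoc, he]; ring
      _ = Real.exp (-α*t) * (v^n * P b n (-(d*v))) := by rw [hk]
      _ = ∑' i : ℕ, Real.exp (-α*t) * (v^n * (poch b i * (-(d*v)) ^ i / (i.factorial * (n+i).factorial))) := by
          rw [P, ← tsum_mul_left, ← tsum_mul_left]
      _ = _ := by
          apply tsum_congr; intro i
          have : (-(d*v)) ^ i = (-d)^i * v^i := by rw [show -(d*v) = (-d)*v from by ring, mul_pow]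
          rw [this, pow_add]; ring
  simp_rw [hinteg]
  rw [integral_series _ (-d) b n hb ht]
  have hk2 := kummer b (n+1) hb2 (-(d*t))
  rw [neg_neg, hba] at hk2
  have he2 : Real.exp (-α*t) = Real.exp (-β*t) * Real.exp (d*t) := by
    rw [← Real.exp_add, hdd]; ring_nf
  rw [show (-d)*t = -(d*t) from by ring, ← hk2, he2]
  ring

/-- integrability of the basic pieces -/
lemma integrable_piece (lam β : ℝ) {d : ℝ} (hd : 0 < d) (a n : ℕ) (ha : a ≤ n+1) {t : ℝ} (ht : 0 < t) :
    IntervalIntegrable (fun v => Real.exp (-lam*(t-v)) * (Real.exp (-β*v) * (v^n * P a n (d*v))))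
      MeasureTheory.volume 0 t := by
  have hmono : MonotoneOn (fun v => P a n (d*v)) (Set.uIcc (0:ℝ) t) := by
    rw [Set.uIcc_of_le ht.le]
    intro x hx y hy hxy
    apply Summable.tsum_le_tsum _ (P_summable a n ha (d*x)) (P_summable a n ha (d*y))
    intro i
    have hx0 : 0 ≤ x := hx.1
    have hdx : d*x ≤ d*y := by nlinarith
    gcongr
    exact poch_nonneg (by positivity) i
  have h1 : IntervalIntegrable (fun v => P a n (d*v)) MeasureTheory.volume 0 t :=
    hmono.intervalIntegrable
  have h2 : ContinuousOn (fun v => Real.exp (-lam*(t-v)) * Real.exp (-β*v) * v^n)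
      (Set.uIcc (0:ℝ) t) := by
    apply Continuous.continuousOn
    continuity
  have heq : (fun v => Real.exp (-lam*(t-v)) * (Real.exp (-β*v) * (v^n * P a n (d*v))))
      = fun v => P a n (d*v) * (Real.exp (-lam*(t-v)) * Real.exp (-β*v) * v^n) := by
    funext v; ring
  rw [heq]
  exact h1.mul_continuousOn h2

lemma pascal_sum (x y : ℝ) (m : ℕ) (G : ℕ → ℝ) :
    ∑ r ∈ range (m+1), (m.choose r : ℝ) * x^r * y^(m-r) * (x * G (r+1) + y * G r)
      = ∑ r ∈ range (m+2), ((m+1).choose r : ℝ) * x^r * y^(m+1-r) * G r := by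
  rw [Finset.sum_range_succ' (fun r => ((m+1).choose r : ℝ) * x^r * y^(m+1-r) * G r) (m+1)]
  have hsplit : ∀ r ∈ range (m+1),
      (((m+1).choose (r+1) : ℕ) : ℝ) * x^(r+1) * y^(m+1-(r+1)) * G (r+1)
      = (m.choose r : ℝ) * x^(r+1) * y^(m-r) * G (r+1)
        + (m.choose (r+1) : ℝ) * x^(r+1) * y^(m-r) * G (r+1) := by
    intro r hr
    rw [Nat.choose_succ_succ]
    have h1 : m+1-(r+1) = m-r := by omega
    rw [h1]
    push_cast; ring
  rw [Finset.sum_congr rfl hsplit, Finset.sum_add_distrib]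
  have hsec : (∑ r ∈ range (m+1), (m.choose (r+1) : ℝ) * x^(r+1) * y^(m-r) * G (r+1))
      + (((m+1).choose 0 : ℕ) : ℝ) * x^0 * y^(m+1-0) * G 0
      = ∑ r ∈ range (m+1), (m.choose r : ℝ) * x^r * y^(m+1-r) * G r := by
    have h0 := Finset.sum_range_succ' (fun r => (m.choose r : ℝ) * x^r * y^(m+1-r) * G r) (m+1)
    rw [Finset.sum_range_succ] at h0
    simp only [Nat.choose_succ_self, Nat.cast_zero, zero_mul, add_zero] at h0
    rw [h0]
    congr 1
    · apply Finset.sum_congr rfl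
      intro r hr
      have h1 : m+1-(r+1) = m-r := by omega
      rw [h1]
    · simp
  rw [add_assoc, hsec, ← Finset.sum_add_distrib]
  symm
  apply Finset.sum_congr rfl
  intro r hr
  simp only [Finset.mem_range] at hr
  have h1 : m+1-r = (m-r)+1 := by omega
  rw [h1, pow_succ]
  ring

lemma P_two_one (z : ℝ) : P 2 1 z = Real.exp z := by
  rw [P, exp_tsum]
  apply tsum_congr
  intro i
  have h1 : poch 2 i = ((1+i).factorial : ℝ) := by
    have h := poch_nat_factorial 1 i
    norm_num at h
    exact h
  push_cast
  rw [h1]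
  have h2 : ((1+i).factorial : ℝ) ≠ 0 := by exact_mod_cast (1+i).factorial_ne_zero
  field_simp

lemma P_zero_one (z : ℝ) : P 0 1 z = 1 := by
  rw [P]
  rw [tsum_eq_single 0]
  · simp [poch_zero]
  · intro i hi
    obtain ⟨j, rfl⟩ : ∃ j, i = j+1 := ⟨i-1, by omega⟩
    rw [show ((0:ℕ):ℝ) = (0:ℝ) by norm_num, poch_succ']
    simp

lemma bridge (a m : ℕ) (z : ℝ) :
    hyp1F1 (a) ((m:ℝ)+2) z / Real.Gamma ((m:ℝ)+2) = P a (m+1) z := by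
  have hg : Real.Gamma ((m:ℝ)+2) = ((m+1).factorial : ℝ) := by
    rw [show ((m:ℝ)+2) = ((m+1:ℕ):ℝ)+1 by push_cast; ring, Real.Gamma_nat_eq_factorial]
  rw [hg, hyp1F1, P, ← tsum_div_const]
  apply tsum_congr
  intro i
  have hpoch : poch ((m:ℝ)+2) i * ((m+1).factorial : ℝ) = (((m+1)+i).factorial : ℝ) := by
    have := poch_nat_factorial (m+1) i
    rw [show ((m+1:ℕ):ℝ)+1 = (m:ℝ)+2 by push_cast; ring] at this
    exact this
  have hpos : 0 < poch ((m:ℝ)+2) i := poch_pos (by positivity) i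
  have h2 : ((i.factorial:ℝ)) ≠ 0 := by exact_mod_cast i.factorial_ne_zero
  have h3 : (((m+1).factorial:ℝ)) ≠ 0 := by exact_mod_cast (m+1).factorial_ne_zero
  rw [← hpoch]
  field_simp

lemma conv_f (p q α β : ℝ) (hαβ : α < β) (f : ℝ → ℝ)
    (hf : f = fun s => p * α * Real.exp (-α * s) + q * β * Real.exp (-β * s))
    (a n : ℕ) (ha : a ≤ n+1) {t : ℝ} (ht : 0 < t) :
    ∫ v in (0:ℝ)..t, f (t-v) * (Real.exp (-β*v) * (v^n * P a n ((β-α)*v)))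
      = p*α*(Real.exp (-β*t) * (t^(n+1) * P (a+1) (n+1) ((β-α)*t)))
        + q*β*(Real.exp (-β*t) * (t^(n+1) * P a (n+1) ((β-α)*t))) := by
  have hd : (0:ℝ) < β - α := by linarith
  have heq : ∀ v : ℝ, f (t-v) * (Real.exp (-β*v) * (v^n * P a n ((β-α)*v)))
      = p*α*(Real.exp (-α*(t-v)) * (Real.exp (-β*v) * (v^n * P a n ((β-α)*v))))
        + q*β*(Real.exp (-β*(t-v)) * (Real.exp (-β*v) * (v^n * P a n ((β-α)*v)))) := by
    intro v; rw [hf]; ring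
  simp_rw [heq]
  rw [intervalIntegral.integral_add ((integrable_piece α β hd a n ha ht).const_mul _)
    ((integrable_piece β β hd a n ha ht).const_mul _)]
  rw [intervalIntegral.integral_const_mul, intervalIntegral.integral_const_mul]
  rw [conv_alpha α β hαβ a n ha ht, conv_beta β hd a n ha ht]

lemma integrable_f_piece (p q α β : ℝ) (hαβ : α < β) (f : ℝ → ℝ)
    (hf : f = fun s => p * α * Real.exp (-α * s) + q * β * Real.exp (-β * s))
    (a n : ℕ) (ha : a ≤ n+1) {t : ℝ} (ht : 0 < t) :
    IntervalIntegrable (fun v => f (t-v) * (Real.exp (-β*v) * (v^n * P a n ((β-α)*v))))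
      MeasureTheory.volume 0 t := by
  have hd : (0:ℝ) < β - α := by linarith
  have heq : (fun v => f (t-v) * (Real.exp (-β*v) * (v^n * P a n ((β-α)*v))))
      = fun v => p*α*(Real.exp (-α*(t-v)) * (Real.exp (-β*v) * (v^n * P a n ((β-α)*v))))
        + q*β*(Real.exp (-β*(t-v)) * (Real.exp (-β*v) * (v^n * P a n ((β-α)*v)))) := by
    funext v; rw [hf]; ring
  rw [heq]
  exact ((integrable_piece α β hd a n ha ht).const_mul _).add
    ((integrable_piece β β hd a n ha ht).const_mul _)

/-- `(f^{*m} * f₁)(t)` for the mixed exponential density, expressed via `₁F₁`. -/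
theorem mixed_exponential_conv_hyp1F1 (p q α β : ℝ) (hp : 0 < p) (hp1 : p < 1)
    (hq : q = 1 - p) (hα : 0 < α) (hαβ : α < β)
    (f f₁ : ℝ → ℝ) (hf : f = fun t => p * α * exp (-α * t) + q * β * exp (-β * t))
    (hf₁ : f₁ = fun t => t * f t) :
    ∀ (m : ℕ) (t : ℝ), 0 < t →
      cpm f f₁ m t
        = p * α * ∑ r ∈ range (m + 1),
            (m.choose r : ℝ) * (α * p) ^ r * (β * q) ^ (m - r) *
              (exp (-β * t) * t ^ (m + 1) / Gamma (m + 2)) *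
              hyp1F1 (r + 2) (m + 2) ((β - α) * t)
          + q * β * ∑ r ∈ range (m + 1),
            (m.choose r : ℝ) * (α * p) ^ r * (β * q) ^ (m - r) *
              (exp (-β * t) * t ^ (m + 1) / Gamma (m + 2)) *
              hyp1F1 r (m + 2) ((β - α) * t) := by
  intro m t ht
  have key : ∀ (k : ℕ) (s : ℝ), 0 < s → cpm f f₁ k s
      = ∑ r ∈ range (k+1), (k.choose r : ℝ) * (α*p)^r * (β*q)^(k-r) *
          (p*α*(Real.exp (-β*s) * (s^(k+1) * P (r+2) (k+1) ((β-α)*s)))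
            + q*β*(Real.exp (-β*s) * (s^(k+1) * P r (k+1) ((β-α)*s)))) := by
    intro k
    induction k with
    | zero =>
      intro s hs
      simp only [cpm, hf₁, hf]
      rw [Finset.sum_range_one]
      norm_num [P_two_one, P_zero_one]
      have hee : Real.exp (-(β*s)) * Real.exp ((β-α)*s) = Real.exp (-(α*s)) := by
        rw [← Real.exp_add]; ring_nf
      linear_combination (-(p*α*s)) * hee
    | succ k ihk =>
      intro s hs
      have hunfold : cpm f f₁ (k+1) s = ∫ v in (0:ℝ)..s, f (s-v) * cpm f f₁ k v := rfl
      rw [hunfold]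
      have hcongr : ∫ v in (0:ℝ)..s, f (s-v) * cpm f f₁ k v
          = ∫ v in (0:ℝ)..s, f (s-v) * (∑ r ∈ range (k+1), (k.choose r : ℝ) * (α*p)^r * (β*q)^(k-r) *
              (p*α*(Real.exp (-β*v) * (v^(k+1) * P (r+2) (k+1) ((β-α)*v)))
                + q*β*(Real.exp (-β*v) * (v^(k+1) * P r (k+1) ((β-α)*v))))) := by
        rw [intervalIntegral.integral_of_le hs.le, intervalIntegral.integral_of_le hs.le]
        apply MeasureTheory.setIntegral_congr_fun measurableSet_Ioc
        intro v hv
        dsimp only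
        rw [ihk v hv.1]
      rw [hcongr]
      have hrw : ∀ v : ℝ, f (s-v) * (∑ r ∈ range (k+1), (k.choose r : ℝ) * (α*p)^r * (β*q)^(k-r) *
              (p*α*(Real.exp (-β*v) * (v^(k+1) * P (r+2) (k+1) ((β-α)*v)))
                + q*β*(Real.exp (-β*v) * (v^(k+1) * P r (k+1) ((β-α)*v)))))
          = ∑ r ∈ range (k+1),
              (((k.choose r : ℝ) * (α*p)^r * (β*q)^(k-r) * (p*α)) *
                 (f (s-v) * (Real.exp (-β*v) * (v^(k+1) * P (r+2) (k+1) ((β-α)*v))))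
               + ((k.choose r : ℝ) * (α*p)^r * (β*q)^(k-r) * (q*β)) *
                 (f (s-v) * (Real.exp (-β*v) * (v^(k+1) * P r (k+1) ((β-α)*v))))) := by
        intro v
        rw [Finset.mul_sum]
        apply Finset.sum_congr rfl
        intro r hr
        ring
      simp_rw [hrw]
      rw [intervalIntegral.integral_finset_sum (fun r hr => by
        exact ((integrable_f_piece p q α β hαβ f hf (r+2) (k+1) (by
            have := Finset.mem_range.mp hr; omega) hs).const_mul _).add
          ((integrable_f_piece p q α β hαβ f hf r (k+1) (by
            have := Finset.mem_range.mp hr; omega) hs).const_mul _))]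
      have hval : ∀ r ∈ range (k+1),
          (∫ v in (0:ℝ)..s,
              (((k.choose r : ℝ) * (α*p)^r * (β*q)^(k-r) * (p*α)) *
                 (f (s-v) * (Real.exp (-β*v) * (v^(k+1) * P (r+2) (k+1) ((β-α)*v))))
               + ((k.choose r : ℝ) * (α*p)^r * (β*q)^(k-r) * (q*β)) *
                 (f (s-v) * (Real.exp (-β*v) * (v^(k+1) * P r (k+1) ((β-α)*v))))))
          = (k.choose r : ℝ) * (α*p)^r * (β*q)^(k-r) *
              ((α*p) * (p*α*(Real.exp (-β*s) * (s^(k+1+1) * P ((r+1)+2) (k+1+1) ((β-α)*s)))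
                        + q*β*(Real.exp (-β*s) * (s^(k+1+1) * P (r+1) (k+1+1) ((β-α)*s))))
               + (β*q) * (p*α*(Real.exp (-β*s) * (s^(k+1+1) * P (r+2) (k+1+1) ((β-α)*s)))
                        + q*β*(Real.exp (-β*s) * (s^(k+1+1) * P r (k+1+1) ((β-α)*s))))) := by
        intro r hr
        have hr' : r ≤ k := by have := Finset.mem_range.mp hr; omega
        have ha1 : r+2 ≤ (k+1)+1 := by omega
        have ha2 : r ≤ (k+1)+1 := by omega
        rw [intervalIntegral.integral_add
          ((integrable_f_piece p q α β hαβ f hf (r+2) (k+1) ha1 hs).const_mul _)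
          ((integrable_f_piece p q α β hαβ f hf r (k+1) ha2 hs).const_mul _)]
        rw [intervalIntegral.integral_const_mul, intervalIntegral.integral_const_mul]
        rw [conv_f p q α β hαβ f hf (r+2) (k+1) ha1 hs, conv_f p q α β hαβ f hf r (k+1) ha2 hs]
        have h3 : (r+2)+1 = (r+1)+2 := by omega
        rw [h3]
        ring
      rw [Finset.sum_congr rfl hval]
      exact pascal_sum (α*p) (β*q) k (fun j =>
        p*α*(Real.exp (-β*s) * (s^(k+1+1) * P (j+2) (k+1+1) ((β-α)*s)))
          + q*β*(Real.exp (-β*s) * (s^(k+1+1) * P j (k+1+1) ((β-α)*s))))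
  rw [key m t ht]
  have hΓ : Real.Gamma ((m:ℝ)+2) ≠ 0 := by
    rw [show ((m:ℝ)+2) = ((m+1:ℕ):ℝ)+1 by push_cast; ring, Real.Gamma_nat_eq_factorial]
    exact_mod_cast (m+1).factorial_ne_zero
  rw [Finset.mul_sum, Finset.mul_sum, ← Finset.sum_add_distrib]
  apply Finset.sum_congr rfl
  intro r hr
  have b1 := bridge (r+2) m ((β-α)*t)
  have b2 := bridge r m ((β-α)*t)
  rw [← b1, ← b2]
  push_cast
  field_simp
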